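/- Let g¹ ∈ {2,…,T} and t ∈ {g¹,…,T} with P(G¹=g¹) > 0 and P(D¹_t=0) > 0, and set b := g¹−1. Under No Anticipation, Homogeneous effects, and the Baseline parallel trend, if additionally there is no interaction, i.e. A = A¹ + A², then ATT^CS(g¹,t) = ATT¹(g¹,t) + Γ₁₂(g¹,t)·A², where Γ₁₂(g¹,t) := P(D²_t=1, D²_b=0 | G¹=g¹) − P(D²_t=1, D²_b=0 | D¹_t=0) is the confoundedness diagnostic. -/

import Mathlib

/- Two-event staggered Difference-in-Differences setup (Callaway–Sant'Anna with a
confounding event).  Cohorts take values in `{2,…,T} ∪ {∞} ⊆ ℕ∞`; the potential-outcome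
index `0 : ℕ∞` codes "never treated by that event". -/

open MeasureTheory ProbabilityTheory

noncomputable section

namespace TwoEventDiD

variable {Ω : Type*} [MeasurableSpace Ω]

/-- Expectation of `Z` conditional on the event `A`: `E[Z | A]`. -/
def cE (μ : Measure Ω) (A : Set Ω) (Z : Ω → ℝ) : ℝ := ∫ ω, Z ω ∂(μ[|A])

/-- Probability of `B` conditional on the event `A`: `P(B | A)`. -/
def cP (μ : Measure Ω) (A B : Set Ω) : ℝ := (μ[|A] B).toReal

/-- `g` lies in `{2,…,T} ∪ {∞}`. -/
def InCohort (T : ℕ) (g : ℕ∞) : Prop := g = ⊤ ∨ ((2 : ℕ∞) ≤ g ∧ g ≤ (T : ℕ∞))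

/-- Realized outcome `Y_t := Y_t(G¹,G²)`. -/
def Yr (G1 G2 : Ω → ℕ∞) (Y : ℕ → ℕ∞ → ℕ∞ → Ω → ℝ) (t : ℕ) : Ω → ℝ :=
  fun ω => Y t (G1 ω) (G2 ω) ω

/-- Double-group-time average treatment effect
`ATT(g¹,g²,t) = E[Y_t(g¹,g²) − Y_t(0,0) | G¹=g¹, G²=g²]`. -/
def ATT (μ : Measure Ω) (G1 G2 : Ω → ℕ∞) (Y : ℕ → ℕ∞ → ℕ∞ → Ω → ℝ)
    (g1 g2 : ℕ∞) (t : ℕ) : ℝ :=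
  cE μ {ω | G1 ω = g1 ∧ G2 ω = g2} fun ω => Y t g1 g2 ω - Y t 0 0 ω

/-- Target (event-1) treatment effect
`ATT¹(g¹,g²,t) = E[Y_t(g¹,0) − Y_t(0,0) | G¹=g¹, G²=g²]`. -/
def ATT1 (μ : Measure Ω) (G1 G2 : Ω → ℕ∞) (Y : ℕ → ℕ∞ → ℕ∞ → Ω → ℝ)
    (g1 g2 : ℕ∞) (t : ℕ) : ℝ :=
  cE μ {ω | G1 ω = g1 ∧ G2 ω = g2} fun ω => Y t g1 0 ω - Y t 0 0 ω

/-- Confounding (event-2) treatment effect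
`ATT²(g¹,g²,t) = E[Y_t(0,g²) − Y_t(0,0) | G¹=g¹, G²=g²]`. -/
def ATT2 (μ : Measure Ω) (G1 G2 : Ω → ℕ∞) (Y : ℕ → ℕ∞ → ℕ∞ → Ω → ℝ)
    (g1 g2 : ℕ∞) (t : ℕ) : ℝ :=
  cE μ {ω | G1 ω = g1 ∧ G2 ω = g2} fun ω => Y t 0 g2 ω - Y t 0 0 ω

/-- No Anticipation (unconditional version): before `max(g¹,g²)` the mean outcome of
cohort `(g¹,g²)` coincides with the appropriate less-treated potential outcome. -/
def NoAnticipation (μ : Measure Ω) (G1 G2 : Ω → ℕ∞) (Y : ℕ → ℕ∞ → ℕ∞ → Ω → ℝ)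
    (T : ℕ) : Prop :=
  ∀ g1 g2 : ℕ∞, InCohort T g1 → InCohort T g2 →
    0 < μ {ω | G1 ω = g1 ∧ G2 ω = g2} →
    ∀ t : ℕ, 1 ≤ t → (t : ℕ∞) < max g1 g2 →
      ((t : ℕ∞) < min g1 g2 →
        cE μ {ω | G1 ω = g1 ∧ G2 ω = g2} (Y t g1 g2)
          = cE μ {ω | G1 ω = g1 ∧ G2 ω = g2} (Y t 0 0)) ∧
      (g1 ≤ (t : ℕ∞) ∧ (t : ℕ∞) < g2 →
        cE μ {ω | G1 ω = g1 ∧ G2 ω = g2} (Y t g1 g2)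
          = cE μ {ω | G1 ω = g1 ∧ G2 ω = g2} (Y t g1 0)) ∧
      (g2 ≤ (t : ℕ∞) ∧ (t : ℕ∞) < g1 →
        cE μ {ω | G1 ω = g1 ∧ G2 ω = g2} (Y t g1 g2)
          = cE μ {ω | G1 ω = g1 ∧ G2 ω = g2} (Y t 0 g2))

end TwoEventDiD

open TwoEventDiD


namespace DiDProof

open MeasureTheory ProbabilityTheory TwoEventDiD

variable {Ω : Type*} [MeasurableSpace Ω]

lemma cE_eq (μ : Measure Ω) (A : Set Ω) (Z : Ω → ℝ) :
    cE μ A Z = (μ A).toReal⁻¹ * ∫ ω in A, Z ω ∂μ := by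
  simp [cE, ProbabilityTheory.cond, integral_smul_measure, ENNReal.toReal_inv]

lemma cP_eq (μ : Measure Ω) (A B : Set Ω) (hA : MeasurableSet A) :
    cP μ A B = (μ A).toReal⁻¹ * (μ (A ∩ B)).toReal := by
  rw [cP, ProbabilityTheory.cond_apply hA]
  simp [ENNReal.toReal_mul, ENNReal.toReal_inv]

lemma meas_level (G : Ω → ℕ∞) (hmG : ∀ g : ℕ∞, MeasurableSet {ω | G ω = g})
    (p : ℕ∞ → Prop) : MeasurableSet {ω | p (G ω)} := by
  have h : {ω | p (G ω)} = ⋃ g ∈ {g : ℕ∞ | p g}, {ω | G ω = g} := by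
    ext ω
    simp only [Set.mem_setOf_eq, Set.mem_iUnion, exists_prop]
    exact ⟨fun h => ⟨G ω, h, rfl⟩, fun ⟨g, hg, he⟩ => he ▸ hg⟩
  rw [h]
  exact MeasurableSet.biUnion (Set.to_countable _) fun g _ => hmG g

/-- The finite set of possible cohort values. -/
def Scoh (T : ℕ) : Finset ℕ∞ := insert ⊤ ((Finset.Icc 2 T).image fun n : ℕ => (n : ℕ∞))

lemma mem_Scoh {T : ℕ} {g : ℕ∞} (h : InCohort T g) : g ∈ Scoh T := by
  rcases h with h | ⟨h2, hT⟩
  · simp [Scoh, h]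
  · have hne : g ≠ ⊤ := by
      intro hg; rw [hg] at hT; exact absurd hT (by simp)
    lift g to ℕ using hne with n
    have h2' : 2 ≤ n := by exact_mod_cast h2
    have hT' : n ≤ T := by exact_mod_cast hT
    simp only [Scoh, Finset.mem_insert, Finset.mem_image, Finset.mem_Icc]
    exact Or.inr ⟨n, ⟨h2', hT'⟩, rfl⟩

lemma inCohort_of_mem {T : ℕ} {g : ℕ∞} (h : g ∈ Scoh T) : InCohort T g := by
  simp only [Scoh, Finset.mem_insert, Finset.mem_image, Finset.mem_Icc] at h
  rcases h with h | ⟨n, ⟨h2, hT⟩, rfl⟩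
  · exact Or.inl h
  · exact Or.inr ⟨by exact_mod_cast h2, by exact_mod_cast hT⟩

lemma integral_partition (μ : Measure Ω) (s : Finset ℕ∞) (G : Ω → ℕ∞)
    (hmG : ∀ g : ℕ∞, MeasurableSet {ω | G ω = g}) (hmem : ∀ ω, G ω ∈ s)
    (A : Set Ω) (hA : MeasurableSet A) (Z : Ω → ℝ)
    (hZ : ∀ g ∈ s, IntegrableOn Z (A ∩ {ω | G ω = g}) μ) :
    ∫ ω in A, Z ω ∂μ = ∑ g ∈ s, ∫ ω in A ∩ {ω | G ω = g}, Z ω ∂μ := by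
  have hU : A = ⋃ g ∈ s, A ∩ {ω | G ω = g} := by
    ext ω
    simp only [Set.mem_iUnion, Set.mem_inter_iff, Set.mem_setOf_eq, exists_prop]
    exact ⟨fun h => ⟨G ω, hmem ω, h, rfl⟩, fun ⟨g, _, h, _⟩ => h⟩
  rw [show (∫ ω in A, Z ω ∂μ) = ∫ ω in ⋃ g ∈ s, A ∩ {ω | G ω = g}, Z ω ∂μ by rw [← hU]]
  exact integral_biUnion_finset s (fun g _ => hA.inter (hmG g))
    (fun g _ g' _ hgg' => Set.disjoint_left.mpr fun ω ⟨_, h1⟩ ⟨_, h2⟩ => hgg' (h1.symm.trans h2))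
    hZ

section Eff

variable (μ : Measure Ω) [IsProbabilityMeasure μ] (T : ℕ)
  (G1 G2 : Ω → ℕ∞) (Y : ℕ → ℕ∞ → ℕ∞ → Ω → ℝ)

/-- Per-cell effect at a single time `s`. -/
lemma cell_eff
    (hYint : ∀ (t : ℕ) (g1 g2 : ℕ∞), Integrable (Y t g1 g2) μ)
    (hNA : NoAnticipation μ G1 G2 Y T)
    (A1 A2 A : ℝ)
    (hA1 : ∀ (g1 g2 : ℕ∞) (t : ℕ), InCohort T g1 → InCohort T g2 →
      0 < μ {ω | G1 ω = g1 ∧ G2 ω = g2} → g1 ≤ (t : ℕ∞) →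
      ATT1 μ G1 G2 Y g1 g2 t = A1)
    (hA2 : ∀ (g1 g2 : ℕ∞) (t : ℕ), InCohort T g1 → InCohort T g2 →
      0 < μ {ω | G1 ω = g1 ∧ G2 ω = g2} → g2 ≤ (t : ℕ∞) →
      ATT2 μ G1 G2 Y g1 g2 t = A2)
    (hA : ∀ (g1 g2 : ℕ∞) (t : ℕ), InCohort T g1 → InCohort T g2 →
      0 < μ {ω | G1 ω = g1 ∧ G2 ω = g2} → g1 ≤ (t : ℕ∞) → g2 ≤ (t : ℕ∞) →
      ATT μ G1 G2 Y g1 g2 t = A)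
    (hadd : A = A1 + A2)
    (γ1 γ2 : ℕ∞) (h1 : InCohort T γ1) (h2 : InCohort T γ2)
    (s : ℕ) (hs : 1 ≤ s) :
    ∫ ω in {ω | G1 ω = γ1 ∧ G2 ω = γ2}, Y s γ1 γ2 ω ∂μ
      - ∫ ω in {ω | G1 ω = γ1 ∧ G2 ω = γ2}, Y s 0 0 ω ∂μ
    = (μ {ω | G1 ω = γ1 ∧ G2 ω = γ2}).toReal *
        ((if γ1 ≤ (s : ℕ∞) then A1 else 0) + (if γ2 ≤ (s : ℕ∞) then A2 else 0)) := by
  classical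
  set cell := {ω | G1 ω = γ1 ∧ G2 ω = γ2} with hcell
  by_cases h0 : μ cell = 0
  · have hz : μ.restrict cell = 0 := Measure.restrict_eq_zero.mpr h0
    simp [hz, h0]
  · have hpos : 0 < μ cell := pos_iff_ne_zero.mpr h0
    have hm : (μ cell).toReal ≠ 0 := (ENNReal.toReal_pos h0 (measure_ne_top μ _)).ne'
    have unc : ∀ (W : Ω → ℝ) (c : ℝ), cE μ cell W = c →
        ∫ ω in cell, W ω ∂μ = (μ cell).toReal * c := by
      intro W c h
      rw [cE_eq] at h
      rw [← h, ← mul_assoc, mul_inv_cancel₀ hm, one_mul]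
    have cancel : ∀ (W1 W2 : Ω → ℝ), cE μ cell W1 = cE μ cell W2 →
        ∫ ω in cell, W1 ω ∂μ = ∫ ω in cell, W2 ω ∂μ := by
      intro W1 W2 h
      rw [cE_eq, cE_eq] at h
      exact mul_left_cancel₀ (inv_ne_zero hm) h
    by_cases h1t : γ1 ≤ (s : ℕ∞) <;> by_cases h2t : γ2 ≤ (s : ℕ∞)
    · -- both treated : ATT = A
      have hatt := hA γ1 γ2 s h1 h2 hpos h1t h2t
      rw [ATT] at hatt
      have hI := unc _ _ hatt
      rw [integral_sub (hYint s γ1 γ2).integrableOn (hYint s 0 0).integrableOn] at hI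
      rw [if_pos h1t, if_pos h2t, ← hadd]
      exact hI
    · -- only event 1
      have hlt2 : (s : ℕ∞) < γ2 := not_le.mp h2t
      have hNAr := (hNA γ1 γ2 h1 h2 hpos s hs
        (lt_of_lt_of_le hlt2 (le_max_right γ1 γ2))).2.1 ⟨h1t, hlt2⟩
      have hEq := cancel _ _ hNAr
      have hatt := hA1 γ1 γ2 s h1 h2 hpos h1t
      rw [ATT1] at hatt
      have hI := unc _ _ hatt
      rw [integral_sub (hYint s γ1 0).integrableOn (hYint s 0 0).integrableOn] at hI
      rw [if_pos h1t, if_neg h2t, add_zero, hEq]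
      exact hI
    · -- only event 2
      have hlt1 : (s : ℕ∞) < γ1 := not_le.mp h1t
      have hNAr := (hNA γ1 γ2 h1 h2 hpos s hs
        (lt_of_lt_of_le hlt1 (le_max_left γ1 γ2))).2.2 ⟨h2t, hlt1⟩
      have hEq := cancel _ _ hNAr
      have hatt := hA2 γ1 γ2 s h1 h2 hpos h2t
      rw [ATT2] at hatt
      have hI := unc _ _ hatt
      rw [integral_sub (hYint s 0 γ2).integrableOn (hYint s 0 0).integrableOn] at hI
      rw [if_neg h1t, if_pos h2t, zero_add, hEq]
      exact hI
    · -- neither treated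
      have hlt1 : (s : ℕ∞) < γ1 := not_le.mp h1t
      have hlt2 : (s : ℕ∞) < γ2 := not_le.mp h2t
      have hNAr := (hNA γ1 γ2 h1 h2 hpos s hs
        (lt_of_lt_of_le hlt1 (le_max_left γ1 γ2))).1 (lt_min hlt1 hlt2)
      have hEq := cancel _ _ hNAr
      rw [if_neg h1t, if_neg h2t, hEq]
      simp

/-- Per-cell decomposition of the double difference. -/
lemma cell_key
    (hYint : ∀ (t : ℕ) (g1 g2 : ℕ∞), Integrable (Y t g1 g2) μ)
    (hNA : NoAnticipation μ G1 G2 Y T)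
    (A1 A2 A : ℝ)
    (hA1 : ∀ (g1 g2 : ℕ∞) (t : ℕ), InCohort T g1 → InCohort T g2 →
      0 < μ {ω | G1 ω = g1 ∧ G2 ω = g2} → g1 ≤ (t : ℕ∞) →
      ATT1 μ G1 G2 Y g1 g2 t = A1)
    (hA2 : ∀ (g1 g2 : ℕ∞) (t : ℕ), InCohort T g1 → InCohort T g2 →
      0 < μ {ω | G1 ω = g1 ∧ G2 ω = g2} → g2 ≤ (t : ℕ∞) →
      ATT2 μ G1 G2 Y g1 g2 t = A2)
    (hA : ∀ (g1 g2 : ℕ∞) (t : ℕ), InCohort T g1 → InCohort T g2 →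
      0 < μ {ω | G1 ω = g1 ∧ G2 ω = g2} → g1 ≤ (t : ℕ∞) → g2 ≤ (t : ℕ∞) →
      ATT μ G1 G2 Y g1 g2 t = A)
    (hadd : A = A1 + A2)
    (t b : ℕ) (hb : 1 ≤ b) (hbt : b ≤ t)
    (γ1 γ2 : ℕ∞) (h1 : InCohort T γ1) (h2 : InCohort T γ2) :
    ∫ ω in {ω | G1 ω = γ1 ∧ G2 ω = γ2}, (Y t γ1 γ2 ω - Y b γ1 γ2 ω) ∂μ
    = (∫ ω in {ω | G1 ω = γ1 ∧ G2 ω = γ2}, (Y t 0 0 ω - Y b 0 0 ω) ∂μ)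
      + (μ {ω | G1 ω = γ1 ∧ G2 ω = γ2}).toReal *
        ((if γ1 ≤ (t : ℕ∞) ∧ ¬ γ1 ≤ (b : ℕ∞) then A1 else 0)
          + (if γ2 ≤ (t : ℕ∞) ∧ ¬ γ2 ≤ (b : ℕ∞) then A2 else 0)) := by
  classical
  have et := cell_eff μ T G1 G2 Y hYint hNA A1 A2 A hA1 hA2 hA hadd γ1 γ2 h1 h2 t
    (le_trans hb hbt)
  have eb := cell_eff μ T G1 G2 Y hYint hNA A1 A2 A hA1 hA2 hA hadd γ1 γ2 h1 h2 b hb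
  rw [integral_sub (hYint t γ1 γ2).integrableOn (hYint b γ1 γ2).integrableOn,
    integral_sub (hYint t 0 0).integrableOn (hYint b 0 0).integrableOn]
  have hbt' : (b : ℕ∞) ≤ (t : ℕ∞) := by exact_mod_cast hbt
  have hite : ∀ (γ : ℕ∞) (c : ℝ),
      (if γ ≤ (t : ℕ∞) then c else 0) - (if γ ≤ (b : ℕ∞) then c else 0)
      = (if γ ≤ (t : ℕ∞) ∧ ¬ γ ≤ (b : ℕ∞) then c else 0) := by
    intro γ c
    by_cases hbc : γ ≤ (b : ℕ∞)
    · rw [if_pos hbc, if_pos (hbc.trans hbt'), if_neg (by simp [hbc])]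
      ring
    · by_cases htc : γ ≤ (t : ℕ∞) <;> simp [hbc, htc]
  linear_combination et - eb + (μ {ω | G1 ω = γ1 ∧ G2 ω = γ2}).toReal * hite γ1 A1
    + (μ {ω | G1 ω = γ1 ∧ G2 ω = γ2}).toReal * hite γ2 A2

end Eff

end DiDProof

open DiDProof

/-- with no interaction (`A = A¹ + A²`), the naive moment equals the
target effect plus the confoundedness diagnostic `Γ₁₂(g¹,t)` times `A²`. -/
theorem naive_staggered_DiD_omitted_event_bias
    {Ω : Type*} [MeasurableSpace Ω] (μ : Measure Ω) [IsProbabilityMeasure μ]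
    (T : ℕ) (hT : 2 ≤ T)
    (G1 G2 : Ω → ℕ∞) (Y : ℕ → ℕ∞ → ℕ∞ → Ω → ℝ)
    (hG1mem : ∀ ω, InCohort T (G1 ω)) (hG2mem : ∀ ω, InCohort T (G2 ω))
    (hmG1 : ∀ g : ℕ∞, MeasurableSet {ω | G1 ω = g})
    (hmG2 : ∀ g : ℕ∞, MeasurableSet {ω | G2 ω = g})
    (hYint : ∀ (t : ℕ) (g1 g2 : ℕ∞), Integrable (Y t g1 g2) μ)
    (hYtop1 : ∀ (t : ℕ) (g2 : ℕ∞), Y t ⊤ g2 = Y t 0 g2)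
    (hYtop2 : ∀ (t : ℕ) (g1 : ℕ∞), Y t g1 ⊤ = Y t g1 0)
    -- No Anticipation
    (hNA : NoAnticipation μ G1 G2 Y T)
    -- Homogeneous effects
    (A1 A2 A : ℝ)
    (hA1 : ∀ (g1 g2 : ℕ∞) (t : ℕ), InCohort T g1 → InCohort T g2 →
      0 < μ {ω | G1 ω = g1 ∧ G2 ω = g2} → g1 ≤ (t : ℕ∞) →
      ATT1 μ G1 G2 Y g1 g2 t = A1)
    (hA2 : ∀ (g1 g2 : ℕ∞) (t : ℕ), InCohort T g1 → InCohort T g2 →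
      0 < μ {ω | G1 ω = g1 ∧ G2 ω = g2} → g2 ≤ (t : ℕ∞) →
      ATT2 μ G1 G2 Y g1 g2 t = A2)
    (hA : ∀ (g1 g2 : ℕ∞) (t : ℕ), InCohort T g1 → InCohort T g2 →
      0 < μ {ω | G1 ω = g1 ∧ G2 ω = g2} → g1 ≤ (t : ℕ∞) → g2 ≤ (t : ℕ∞) →
      ATT μ G1 G2 Y g1 g2 t = A)
    -- the group `g¹ ∈ {2,…,T}` and period `t ∈ {g¹,…,T}`
    (g1 t : ℕ) (hg1 : 2 ≤ g1) (hg1T : g1 ≤ T) (hg1t : g1 ≤ t) (htT : t ≤ T)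
    (hposG : 0 < μ {ω | G1 ω = (g1 : ℕ∞)})
    (hposC : 0 < μ {ω | ¬ G1 ω ≤ (t : ℕ∞)})
    -- Baseline parallel trend (with base period `b = g¹ − 1`)
    (hPT : cE μ {ω | G1 ω = (g1 : ℕ∞)}
            (fun ω => Y t 0 0 ω - Y (g1 - 1) 0 0 ω)
         = cE μ {ω | ¬ G1 ω ≤ (t : ℕ∞)}
            (fun ω => Y t 0 0 ω - Y (g1 - 1) 0 0 ω))
    -- no interaction
    (hadd : A = A1 + A2) :
    cE μ {ω | G1 ω = (g1 : ℕ∞)}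
        (fun ω => Yr G1 G2 Y t ω - Yr G1 G2 Y (g1 - 1) ω)
      - cE μ {ω | ¬ G1 ω ≤ (t : ℕ∞)}
        (fun ω => Yr G1 G2 Y t ω - Yr G1 G2 Y (g1 - 1) ω)
    = cE μ {ω | G1 ω = (g1 : ℕ∞)} (fun ω => Y t (g1 : ℕ∞) 0 ω - Y t 0 0 ω)
      + (cP μ {ω | G1 ω = (g1 : ℕ∞)}
            {ω | G2 ω ≤ (t : ℕ∞) ∧ ¬ G2 ω ≤ ((g1 - 1 : ℕ) : ℕ∞)}
          - cP μ {ω | ¬ G1 ω ≤ (t : ℕ∞)}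
            {ω | G2 ω ≤ (t : ℕ∞) ∧ ¬ G2 ω ≤ ((g1 - 1 : ℕ) : ℕ∞)}) * A2 := by
  classical
  set b := g1 - 1 with hbdef
  have hb1 : 1 ≤ b := by omega
  have hbt : b ≤ t := by omega
  have hg1t' : ((g1 : ℕ) : ℕ∞) ≤ (t : ℕ∞) := by exact_mod_cast hg1t
  have hg1b' : ¬ ((g1 : ℕ) : ℕ∞) ≤ ((b : ℕ) : ℕ∞) := by
    rw [not_le]; exact_mod_cast (by omega : b < g1)
  have hicg1 : InCohort T ((g1 : ℕ) : ℕ∞) :=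
    Or.inr ⟨by exact_mod_cast hg1, by exact_mod_cast hg1T⟩
  have hmemS1 : ∀ ω, G1 ω ∈ Scoh T := fun ω => mem_Scoh (hG1mem ω)
  have hmemS2 : ∀ ω, G2 ω ∈ Scoh T := fun ω => mem_Scoh (hG2mem ω)
  have hmAC : MeasurableSet {ω | ¬ G1 ω ≤ (t : ℕ∞)} :=
    meas_level G1 hmG1 fun g => ¬ g ≤ (t : ℕ∞)
  have hmP : MeasurableSet {ω | G2 ω ≤ (t : ℕ∞) ∧ ¬ G2 ω ≤ ((b : ℕ) : ℕ∞)} :=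
    meas_level G2 hmG2 fun g => g ≤ (t : ℕ∞) ∧ ¬ g ≤ ((b : ℕ) : ℕ∞)
  -- integrability of the realized outcome
  have hYr : ∀ s : ℕ, Integrable (Yr G1 G2 Y s) μ := by
    intro s
    rw [← integrableOn_univ]
    have hU : (Set.univ : Set Ω) = ⋃ γ1 ∈ Scoh T, {ω | G1 ω = γ1} := by
      ext ω
      simp only [Set.mem_univ, Set.mem_iUnion, Set.mem_setOf_eq, exists_prop, true_iff]
      exact ⟨G1 ω, hmemS1 ω, rfl⟩
    rw [hU, integrableOn_finset_iUnion]
    intro γ1 _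
    have hU2 : {ω | G1 ω = γ1} = ⋃ γ2 ∈ Scoh T, ({ω | G1 ω = γ1} ∩ {ω | G2 ω = γ2}) := by
      ext ω
      simp only [Set.mem_iUnion, Set.mem_inter_iff, Set.mem_setOf_eq, exists_prop]
      exact ⟨fun h => ⟨G2 ω, hmemS2 ω, h, rfl⟩, fun ⟨g, _, h, _⟩ => h⟩
    rw [hU2, integrableOn_finset_iUnion]
    intro γ2 _
    refine (hYint s γ1 γ2).integrableOn.congr_fun (fun ω hω => ?_)
      ((hmG1 γ1).inter (hmG2 γ2))
    have h1 : G1 ω = γ1 := hω.1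
    have h2 : G2 ω = γ2 := hω.2
    simp [Yr, h1, h2]
  -- indicator-type summands
  set k1 : Ω → ℝ := fun ω =>
    if G1 ω ≤ (t : ℕ∞) ∧ ¬ G1 ω ≤ ((b : ℕ) : ℕ∞) then A1 else 0 with hk1
  set k2 : Ω → ℝ := fun ω =>
    if G2 ω ≤ (t : ℕ∞) ∧ ¬ G2 ω ≤ ((b : ℕ) : ℕ∞) then A2 else 0 with hk2
  have hk1ind : k1 = Set.indicator
      {ω | G1 ω ≤ (t : ℕ∞) ∧ ¬ G1 ω ≤ ((b : ℕ) : ℕ∞)} (fun _ => A1) := by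
    funext ω; simp [hk1, Set.indicator_apply, Set.mem_setOf_eq]
  have hk2ind : k2 = Set.indicator
      {ω | G2 ω ≤ (t : ℕ∞) ∧ ¬ G2 ω ≤ ((b : ℕ) : ℕ∞)} (fun _ => A2) := by
    funext ω; simp [hk2, Set.indicator_apply, Set.mem_setOf_eq]
  have hk1int : Integrable k1 μ := by
    rw [hk1ind]
    exact (integrable_const A1).indicator
      (meas_level G1 hmG1 fun g => g ≤ (t : ℕ∞) ∧ ¬ g ≤ ((b : ℕ) : ℕ∞))
  have hk2int : Integrable k2 μ := by
    rw [hk2ind]; exact (integrable_const A2).indicator hmP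
  -- main single-cohort claim
  have claim1 : ∀ γ1 : ℕ∞, InCohort T γ1 →
      ∫ ω in {ω | G1 ω = γ1}, (Yr G1 G2 Y t ω - Yr G1 G2 Y b ω) ∂μ
      = (∫ ω in {ω | G1 ω = γ1}, (Y t 0 0 ω - Y b 0 0 ω) ∂μ)
        + ∫ ω in {ω | G1 ω = γ1}, (k1 ω + k2 ω) ∂μ := by
    intro γ1 hic1
    rw [integral_partition μ (Scoh T) G2 hmG2 hmemS2 {ω | G1 ω = γ1} (hmG1 γ1)
          (fun ω => Yr G1 G2 Y t ω - Yr G1 G2 Y b ω)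
          (fun g _ => ((hYr t).sub (hYr b)).integrableOn),
        integral_partition μ (Scoh T) G2 hmG2 hmemS2 {ω | G1 ω = γ1} (hmG1 γ1)
          (fun ω => Y t 0 0 ω - Y b 0 0 ω)
          (fun g _ => ((hYint t 0 0).sub (hYint b 0 0)).integrableOn),
        integral_partition μ (Scoh T) G2 hmG2 hmemS2 {ω | G1 ω = γ1} (hmG1 γ1)
          (fun ω => k1 ω + k2 ω)
          (fun g _ => (hk1int.add hk2int).integrableOn),
        ← Finset.sum_add_distrib]
    refine Finset.sum_congr rfl fun γ2 hγ2 => ?_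
    have hcellEq : {ω | G1 ω = γ1} ∩ {ω | G2 ω = γ2}
        = {ω | G1 ω = γ1 ∧ G2 ω = γ2} := Set.setOf_and.symm
    rw [hcellEq]
    have hmc : MeasurableSet {ω | G1 ω = γ1 ∧ G2 ω = γ2} := by
      rw [← hcellEq]; exact (hmG1 γ1).inter (hmG2 γ2)
    have e1 : ∫ ω in {ω | G1 ω = γ1 ∧ G2 ω = γ2},
          (Yr G1 G2 Y t ω - Yr G1 G2 Y b ω) ∂μ
        = ∫ ω in {ω | G1 ω = γ1 ∧ G2 ω = γ2}, (Y t γ1 γ2 ω - Y b γ1 γ2 ω) ∂μ := by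
      refine setIntegral_congr_fun hmc fun ω hω => ?_
      have h1 : G1 ω = γ1 := hω.1
      have h2 : G2 ω = γ2 := hω.2
      simp [Yr, h1, h2]
    have e2 : ∫ ω in {ω | G1 ω = γ1 ∧ G2 ω = γ2}, (k1 ω + k2 ω) ∂μ
        = (μ {ω | G1 ω = γ1 ∧ G2 ω = γ2}).toReal *
          ((if γ1 ≤ (t : ℕ∞) ∧ ¬ γ1 ≤ ((b : ℕ) : ℕ∞) then A1 else 0)
            + (if γ2 ≤ (t : ℕ∞) ∧ ¬ γ2 ≤ ((b : ℕ) : ℕ∞) then A2 else 0)) := by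
      have heq : Set.EqOn (fun ω => k1 ω + k2 ω)
          (fun _ => (if γ1 ≤ (t : ℕ∞) ∧ ¬ γ1 ≤ ((b : ℕ) : ℕ∞) then A1 else 0)
            + (if γ2 ≤ (t : ℕ∞) ∧ ¬ γ2 ≤ ((b : ℕ) : ℕ∞) then A2 else 0))
          {ω | G1 ω = γ1 ∧ G2 ω = γ2} := by
        intro ω hω
        have h1 : G1 ω = γ1 := hω.1
        have h2 : G2 ω = γ2 := hω.2
        simp only [hk1, hk2, h1, h2]
      rw [setIntegral_congr_fun hmc heq, setIntegral_const, smul_eq_mul, measureReal_def]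
    rw [e1, e2]
    exact cell_key μ T G1 G2 Y hYint hNA A1 A2 A hA1 hA2 hA hadd t b hb1 hbt γ1 γ2
      hic1 (inCohort_of_mem hγ2)
  -- control-side claim
  have claimC :
      ∫ ω in {ω | ¬ G1 ω ≤ (t : ℕ∞)}, (Yr G1 G2 Y t ω - Yr G1 G2 Y b ω) ∂μ
      = (∫ ω in {ω | ¬ G1 ω ≤ (t : ℕ∞)}, (Y t 0 0 ω - Y b 0 0 ω) ∂μ)
        + ∫ ω in {ω | ¬ G1 ω ≤ (t : ℕ∞)}, (k1 ω + k2 ω) ∂μ := by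
    rw [integral_partition μ (Scoh T) G1 hmG1 hmemS1 {ω | ¬ G1 ω ≤ (t : ℕ∞)} hmAC
          (fun ω => Yr G1 G2 Y t ω - Yr G1 G2 Y b ω)
          (fun g _ => ((hYr t).sub (hYr b)).integrableOn),
        integral_partition μ (Scoh T) G1 hmG1 hmemS1 {ω | ¬ G1 ω ≤ (t : ℕ∞)} hmAC
          (fun ω => Y t 0 0 ω - Y b 0 0 ω)
          (fun g _ => ((hYint t 0 0).sub (hYint b 0 0)).integrableOn),
        integral_partition μ (Scoh T) G1 hmG1 hmemS1 {ω | ¬ G1 ω ≤ (t : ℕ∞)} hmAC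
          (fun ω => k1 ω + k2 ω)
          (fun g _ => (hk1int.add hk2int).integrableOn),
        ← Finset.sum_add_distrib]
    refine Finset.sum_congr rfl fun γ1 hγ1 => ?_
    by_cases hle : γ1 ≤ (t : ℕ∞)
    · have hempty : {ω | ¬ G1 ω ≤ (t : ℕ∞)} ∩ {ω | G1 ω = γ1} = ∅ := by
        ext ω
        simp only [Set.mem_inter_iff, Set.mem_setOf_eq, Set.mem_empty_iff_false,
          iff_false, not_and]
        intro hn he
        exact hn (he ▸ hle)
      rw [hempty]
      simp
    · have hfull : {ω | ¬ G1 ω ≤ (t : ℕ∞)} ∩ {ω | G1 ω = γ1} = {ω | G1 ω = γ1} := by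
        ext ω
        simp only [Set.mem_inter_iff, Set.mem_setOf_eq, and_iff_right_iff_imp]
        intro he
        rw [he]
        exact hle
      rw [hfull]
      exact claim1 γ1 (inCohort_of_mem hγ1)
  -- evaluate the k-integrals
  have hkAT : ∫ ω in {ω | G1 ω = ((g1 : ℕ) : ℕ∞)}, (k1 ω + k2 ω) ∂μ
      = (μ {ω | G1 ω = ((g1 : ℕ) : ℕ∞)}).toReal * A1
        + (μ ({ω | G1 ω = ((g1 : ℕ) : ℕ∞)}
            ∩ {ω | G2 ω ≤ (t : ℕ∞) ∧ ¬ G2 ω ≤ ((b : ℕ) : ℕ∞)})).toReal * A2 := by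
    rw [integral_add hk1int.integrableOn hk2int.integrableOn]
    have e1 : ∫ ω in {ω | G1 ω = ((g1 : ℕ) : ℕ∞)}, k1 ω ∂μ
        = (μ {ω | G1 ω = ((g1 : ℕ) : ℕ∞)}).toReal * A1 := by
      have heq : Set.EqOn k1 (fun _ => A1) {ω | G1 ω = ((g1 : ℕ) : ℕ∞)} := by
        intro ω hω
        have h1 : G1 ω = ((g1 : ℕ) : ℕ∞) := hω
        simp only [hk1, h1, if_pos (And.intro hg1t' hg1b')]
      rw [setIntegral_congr_fun (hmG1 _) heq, setIntegral_const, smul_eq_mul, measureReal_def]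
    have e2 : ∫ ω in {ω | G1 ω = ((g1 : ℕ) : ℕ∞)}, k2 ω ∂μ
        = (μ ({ω | G1 ω = ((g1 : ℕ) : ℕ∞)}
            ∩ {ω | G2 ω ≤ (t : ℕ∞) ∧ ¬ G2 ω ≤ ((b : ℕ) : ℕ∞)})).toReal * A2 := by
      rw [hk2ind, setIntegral_indicator hmP, setIntegral_const, smul_eq_mul, measureReal_def]
    rw [e1, e2]
  have hkAC : ∫ ω in {ω | ¬ G1 ω ≤ (t : ℕ∞)}, (k1 ω + k2 ω) ∂μ
      = (μ ({ω | ¬ G1 ω ≤ (t : ℕ∞)}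
          ∩ {ω | G2 ω ≤ (t : ℕ∞) ∧ ¬ G2 ω ≤ ((b : ℕ) : ℕ∞)})).toReal * A2 := by
    rw [integral_add hk1int.integrableOn hk2int.integrableOn]
    have e1 : ∫ ω in {ω | ¬ G1 ω ≤ (t : ℕ∞)}, k1 ω ∂μ = 0 := by
      have heq : Set.EqOn k1 (fun _ => (0 : ℝ)) {ω | ¬ G1 ω ≤ (t : ℕ∞)} := by
        intro ω hω
        have h1 : ¬ G1 ω ≤ (t : ℕ∞) := hω
        simp only [hk1]
        rw [if_neg]
        rintro ⟨hc, -⟩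
        exact h1 hc
      rw [setIntegral_congr_fun hmAC heq]
      simp
    have e2 : ∫ ω in {ω | ¬ G1 ω ≤ (t : ℕ∞)}, k2 ω ∂μ
        = (μ ({ω | ¬ G1 ω ≤ (t : ℕ∞)}
            ∩ {ω | G2 ω ≤ (t : ℕ∞) ∧ ¬ G2 ω ≤ ((b : ℕ) : ℕ∞)})).toReal * A2 := by
      rw [hk2ind, setIntegral_indicator hmP, setIntegral_const, smul_eq_mul, measureReal_def]
    rw [e1, e2, zero_add]
  -- evaluate the target integral
  have hR : ∫ ω in {ω | G1 ω = ((g1 : ℕ) : ℕ∞)},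
        (Y t ((g1 : ℕ) : ℕ∞) 0 ω - Y t 0 0 ω) ∂μ
      = (μ {ω | G1 ω = ((g1 : ℕ) : ℕ∞)}).toReal * A1 := by
    rw [integral_partition μ (Scoh T) G2 hmG2 hmemS2 {ω | G1 ω = ((g1 : ℕ) : ℕ∞)}
          (hmG1 _) (fun ω => Y t ((g1 : ℕ) : ℕ∞) 0 ω - Y t 0 0 ω)
          (fun g _ => ((hYint t _ 0).sub (hYint t 0 0)).integrableOn),
        show (μ {ω | G1 ω = ((g1 : ℕ) : ℕ∞)}).toReal * A1
            = ∫ ω in {ω | G1 ω = ((g1 : ℕ) : ℕ∞)}, (fun _ : Ω => A1) ω ∂μ by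
          rw [setIntegral_const, smul_eq_mul, measureReal_def],
        integral_partition μ (Scoh T) G2 hmG2 hmemS2 {ω | G1 ω = ((g1 : ℕ) : ℕ∞)}
          (hmG1 _) (fun _ => A1) (fun g _ => (integrable_const A1).integrableOn)]
    refine Finset.sum_congr rfl fun γ2 hγ2 => ?_
    have hcellEq : {ω | G1 ω = ((g1 : ℕ) : ℕ∞)} ∩ {ω | G2 ω = γ2}
        = {ω | G1 ω = ((g1 : ℕ) : ℕ∞) ∧ G2 ω = γ2} := Set.setOf_and.symm
    rw [hcellEq, setIntegral_const, smul_eq_mul, measureReal_def]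
    by_cases h0 : μ {ω | G1 ω = ((g1 : ℕ) : ℕ∞) ∧ G2 ω = γ2} = 0
    · rw [h0, Measure.restrict_eq_zero.mpr h0]
      simp
    · have hpos : 0 < μ {ω | G1 ω = ((g1 : ℕ) : ℕ∞) ∧ G2 ω = γ2} :=
        pos_iff_ne_zero.mpr h0
      have hm : (μ {ω | G1 ω = ((g1 : ℕ) : ℕ∞) ∧ G2 ω = γ2}).toReal ≠ 0 :=
        (ENNReal.toReal_pos h0 (measure_ne_top μ _)).ne'
      have hatt := hA1 ((g1 : ℕ) : ℕ∞) γ2 t hicg1 (inCohort_of_mem hγ2) hpos hg1t'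
      rw [ATT1] at hatt
      simp only [cE_eq] at hatt
      rw [← hatt, ← mul_assoc, mul_inv_cancel₀ hm, one_mul]
  -- finish
  simp only [cE_eq,
    cP_eq μ {ω | G1 ω = ((g1 : ℕ) : ℕ∞)}
      {ω | G2 ω ≤ (t : ℕ∞) ∧ ¬ G2 ω ≤ ((b : ℕ) : ℕ∞)} (hmG1 _),
    cP_eq μ {ω | ¬ G1 ω ≤ (t : ℕ∞)}
      {ω | G2 ω ≤ (t : ℕ∞) ∧ ¬ G2 ω ≤ ((b : ℕ) : ℕ∞)} hmAC] at hPT ⊢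
  rw [claim1 ((g1 : ℕ) : ℕ∞) hicg1, claimC, hkAT, hkAC, hR]
  linear_combination hPT
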